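/- The density power divergence converges to the Kullback–Leibler divergence as the tuning parameter tends to zero: if p, q ∈ ℝ^{L+1} are probability vectors (entries nonnegative, summing to 1) with q_j > 0 for all j, then lim_{β → 0⁺} d_β(p, q) = ∑_{j=1}^{L+1} p_j log(p_j/q_j), with the convention 0 · log 0 = 0. -/

import Mathlib

open Finset Real Filter

lemma slope_lim {a b : ℝ} (ha : 0 < a) (hb : 0 < b) :
    Tendsto (fun β : ℝ => (a ^ β - b ^ β) * β⁻¹) (nhdsWithin 0 (Set.Ioi 0))
      (nhds (Real.log a - Real.log b)) := by
  have hg : HasDerivAt (fun β : ℝ => a ^ β - b ^ β) (Real.log a - Real.log b) 0 := by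
    have h1 := (Real.hasStrictDerivAt_const_rpow ha 0).hasDerivAt
    have h2 := (Real.hasStrictDerivAt_const_rpow hb 0).hasDerivAt
    have h3 := h1.sub h2
    simp only [Real.rpow_zero, one_mul] at h3
    exact h3
  have := hasDerivAt_iff_tendsto_slope.mp hg
  have h := this.mono_left (nhdsWithin_mono 0 (by intro x hx; exact ne_of_gt hx))
  refine h.congr' ?_
  filter_upwards [self_mem_nhdsWithin] with β hβ
  have hβ0 : (β : ℝ) ≠ 0 := ne_of_gt hβ
  simp only [slope_def_field, Real.rpow_zero, sub_zero]
  ring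

lemma term_lim {a b : ℝ} (ha : 0 ≤ a) (hb : 0 < b) :
    Tendsto (fun β : ℝ => b ^ (1 + β) - (1 + 1 / β) * a * b ^ β + (1 / β) * a ^ (1 + β))
      (nhdsWithin 0 (Set.Ioi 0)) (nhds (b - a + a * Real.log (a / b))) := by
  have hmid : Tendsto (fun β : ℝ => a * ((a ^ β - b ^ β) * β⁻¹)) (nhdsWithin 0 (Set.Ioi 0))
      (nhds (a * Real.log (a / b))) := by
    rcases eq_or_lt_of_le ha with h0 | h0
    · simp [← h0]
    · have := (slope_lim h0 hb).const_mul a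
      rw [Real.log_div (ne_of_gt h0) (ne_of_gt hb)]
      exact this
  have h1 : Tendsto (fun β : ℝ => b ^ (1 + β)) (nhdsWithin 0 (Set.Ioi 0)) (nhds b) := by
    have : Tendsto (fun β : ℝ => b ^ (1 + β)) (nhds 0) (nhds (b ^ (1 + (0:ℝ)))) := by
      apply Tendsto.rpow tendsto_const_nhds (tendsto_const_nhds.add tendsto_id)
      exact Or.inl (ne_of_gt hb)
    simpa using this.mono_left nhdsWithin_le_nhds
  have h2 : Tendsto (fun β : ℝ => a * b ^ β) (nhdsWithin 0 (Set.Ioi 0)) (nhds a) := by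
    have : Tendsto (fun β : ℝ => a * b ^ β) (nhds 0) (nhds (a * b ^ (0:ℝ))) := by
      apply Tendsto.const_mul
      exact (Real.continuousAt_const_rpow (ne_of_gt hb))
    simpa using this.mono_left nhdsWithin_le_nhds
  have := (h1.sub h2).add hmid
  refine this.congr' ?_
  filter_upwards [self_mem_nhdsWithin] with β hβ
  have hβ0 : (β : ℝ) ≠ 0 := ne_of_gt hβ
  have hβpos : (0:ℝ) < β := hβ
  have hpow : a ^ (1 + β) = a * a ^ β := by
    rcases eq_or_lt_of_le ha with h0 | h0
    · rw [← h0]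
      rw [Real.zero_rpow (by intro h; linarith)]
      rcases eq_or_ne β 0 with h | h
      · exact absurd h hβ0
      · rw [Real.zero_rpow h]; ring
    · rw [Real.rpow_add h0]; simp
  rw [hpow]
  field_simp
  ring

theorem stmt7
    (L : ℕ) (p q : ℕ → ℝ)
    (hp : ∀ j, 1 ≤ j → j ≤ L + 1 → 0 ≤ p j)
    (hpsum : ∑ j ∈ Finset.Icc 1 (L + 1), p j = 1)
    (hq : ∀ j, 1 ≤ j → j ≤ L + 1 → 0 < q j)
    (hqsum : ∑ j ∈ Finset.Icc 1 (L + 1), q j = 1) :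
    Tendsto
      (fun β : ℝ => ∑ j ∈ Finset.Icc 1 (L + 1),
        (q j ^ (1 + β) - (1 + 1 / β) * p j * q j ^ β + (1 / β) * p j ^ (1 + β)))
      (nhdsWithin 0 (Set.Ioi 0))
      (nhds (∑ j ∈ Finset.Icc 1 (L + 1), p j * Real.log (p j / q j))) := by
  have key : Tendsto
      (fun β : ℝ => ∑ j ∈ Finset.Icc 1 (L + 1),
        (q j ^ (1 + β) - (1 + 1 / β) * p j * q j ^ β + (1 / β) * p j ^ (1 + β)))
      (nhdsWithin 0 (Set.Ioi 0))
      (nhds (∑ j ∈ Finset.Icc 1 (L + 1), (q j - p j + p j * Real.log (p j / q j)))) := by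
    apply tendsto_finset_sum
    intro j hj
    simp only [Finset.mem_Icc] at hj
    exact term_lim (hp j hj.1 hj.2) (hq j hj.1 hj.2)
  have : ∑ j ∈ Finset.Icc 1 (L + 1), (q j - p j + p j * Real.log (p j / q j))
      = ∑ j ∈ Finset.Icc 1 (L + 1), p j * Real.log (p j / q j) := by
    rw [Finset.sum_add_distrib, Finset.sum_sub_distrib, hpsum, hqsum]
    ring
  rwa [this] at key
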